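/- arXiv:2004.14561 — 4 statements merged into one kernel-verified Lean document; each statement's English description precedes it below -/
import Mathlib

section
/- Let ε > 0 and let g : [0, ∞) → ℝ be differentiable such that for every t ≥ 0, if g(t) < 0 then g'(t) ≥ ε. Then there exists t ∈ [0, max(0, −g(0)/ε)] with g(t) ≥ 0. -/
/-- Differential variants (dV): if `g` is differentiable on `[0, ∞)` and `g' t ≥ ε > 0` whenever
`g t < 0`, then `g` becomes non-negative by time `max 0 (−g 0 / ε)`. -/
theorem stmt13 (ε : ℝ) (hε : 0 < ε) (g d : ℝ → ℝ)
    (hderiv : ∀ t : ℝ, 0 ≤ t → HasDerivWithinAt g (d t) (Set.Ici 0) t)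
    (hprog : ∀ t : ℝ, 0 ≤ t → g t < 0 → ε ≤ d t) :
    ∃ t ∈ Set.Icc (0 : ℝ) (max 0 (-(g 0) / ε)), 0 ≤ g t := by
  by_contra hcon
  push_neg at hcon
  set T := max 0 (-(g 0) / ε) with hT
  have hT0 : (0 : ℝ) ≤ T := le_max_left _ _
  have hg0 : g 0 < 0 := hcon 0 ⟨le_refl _, hT0⟩
  have hTval : T = -(g 0) / ε := by
    rw [hT, max_eq_right]
    apply div_nonneg (by linarith) hε.le
  have hTpos : 0 < T := by rw [hTval]; exact div_pos (by linarith) hε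
  -- h t = g t - ε t is monotone on [0, T]
  have hmono : MonotoneOn (fun t => g t - ε * t) (Set.Icc 0 T) := by
    apply monotoneOn_of_hasDerivWithinAt_nonneg (f' := fun t => d t - ε)
      (convex_Icc 0 T)
    · intro x hx
      exact ((hderiv x hx.1).mono (Set.Icc_subset_Ici_self)).continuousWithinAt.sub
        (continuousWithinAt_const.mul continuousWithinAt_id)
    · intro x hx
      rw [interior_Icc] at hx ⊢
      exact (((hderiv x hx.1.le).mono (fun y hy => hy.1.le)).sub
        ((hasDerivWithinAt_id x _).const_mul ε)).congr_deriv (by ring)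
    · intro x hx
      rw [interior_Icc] at hx
      have := hprog x hx.1.le (hcon x ⟨hx.1.le, hx.2.le⟩)
      linarith
  have h1 := hmono ⟨le_refl _, hT0⟩ ⟨hT0, le_refl _⟩ hT0
  have hgT : g T < 0 := hcon T ⟨hT0, le_refl _⟩
  simp only at h1
  have : ε * T = -(g 0) := by
    rw [hTval]; field_simp
  linarith
end

section
/- Let ε > 0 and let g : [0, ∞) → ℝ be differentiable (hence continuous) with g(0) ≤ 0, and suppose that for every t ≥ 0, if g(t) < 0 then g'(t) ≥ ε. Then there exists t ≥ 0 with g(t) = 0 and g(s) ≤ 0 for all s ∈ [0, t]. -/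
/-- Equational differential variants (dV₌): if `g` is differentiable on `[0, ∞)`, `g 0 ≤ 0`, and
`g' t ≥ ε > 0` whenever `g t < 0`, then `g` reaches `0` while staying non-positive beforehand. -/
theorem stmt16 (ε : ℝ) (hε : 0 < ε) (g d : ℝ → ℝ)
    (hderiv : ∀ t : ℝ, 0 ≤ t → HasDerivWithinAt g (d t) (Set.Ici 0) t)
    (hg0 : g 0 ≤ 0)
    (hprog : ∀ t : ℝ, 0 ≤ t → g t < 0 → ε ≤ d t) :
    ∃ t : ℝ, 0 ≤ t ∧ g t = 0 ∧ ∀ s ∈ Set.Icc (0 : ℝ) t, g s ≤ 0 := by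
  have hcont : ContinuousOn g (Set.Ici 0) := fun t ht =>
    (hderiv t ht).continuousWithinAt
  -- Step 1: there is some t₁ ≥ 0 with 0 ≤ g t₁.
  have step1 : ∃ t₁ : ℝ, 0 ≤ t₁ ∧ 0 ≤ g t₁ := by
    by_contra h
    push_neg at h
    have hneg : ∀ t : ℝ, 0 ≤ t → g t < 0 := fun t ht => h t ht
    -- h t = g t - ε * t is monotone on Ici 0
    have hmono : MonotoneOn (fun t => g t - ε * t) (Set.Ici (0:ℝ)) := by
      apply monotoneOn_of_hasDerivWithinAt_nonneg (f' := fun t => d t - ε)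
        (convex_Ici 0) (hcont.sub (by fun_prop))
      · intro x hx
        rw [interior_Ici] at hx
        exact ((hderiv x (le_of_lt hx)).sub
          ((hasDerivWithinAt_id x _).const_mul ε |>.congr_deriv (by ring))).mono
          (by rw [interior_Ici]; exact Set.Ioi_subset_Ici le_rfl)
      · intro x hx
        rw [interior_Ici] at hx
        have := hprog x (le_of_lt hx) (hneg x (le_of_lt hx))
        linarith
    set T : ℝ := (1 - g 0) / ε with hT
    have hT0 : 0 ≤ T := div_nonneg (by linarith) hε.le
    have := hmono (Set.self_mem_Ici) (Set.mem_Ici.mpr hT0) hT0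
    have hεT : ε * T = 1 - g 0 := by
      rw [hT]; field_simp
    simp only [mul_zero, sub_zero, hεT] at this
    have := hneg T hT0
    linarith
  obtain ⟨t₁, ht₁0, ht₁⟩ := step1
  -- Step 2: IVT gives a zero in [0, t₁].
  have hcontI : ContinuousOn g (Set.Icc 0 t₁) :=
    hcont.mono (Set.Icc_subset_Ici_self)
  have hivt : (0:ℝ) ∈ g '' Set.Icc 0 t₁ :=
    intermediate_value_Icc ht₁0 hcontI ⟨hg0, ht₁⟩
  -- Let Z be the set of zeros in [0, t₁]; take its infimum.
  set Z : Set ℝ := {t | t ∈ Set.Icc (0:ℝ) t₁ ∧ g t = 0} with hZ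
  have hZne : Z.Nonempty := by
    obtain ⟨x, hx, hgx⟩ := hivt
    exact ⟨x, hx, hgx⟩
  have hZbdd : BddBelow Z := ⟨0, fun x hx => hx.1.1⟩
  set t₀ : ℝ := sInf Z with ht₀
  have hZclosed : IsClosed Z := by
    have : Z = Set.Icc 0 t₁ ∩ g ⁻¹' {0} := by
      ext x; simp only [hZ, Set.mem_setOf_eq, Set.mem_inter_iff, Set.mem_preimage,
        Set.mem_singleton_iff]
    rw [this]
    exact hcontI.preimage_isClosed_of_isClosed isClosed_Icc isClosed_singleton
  have ht₀Z : t₀ ∈ Z := IsClosed.csInf_mem hZclosed hZne hZbdd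
  have ht₀0 : 0 ≤ t₀ := ht₀Z.1.1
  refine ⟨t₀, ht₀0, ht₀Z.2, ?_⟩
  -- Step 3: g ≤ 0 on [0, t₀].
  intro s hs
  rcases eq_or_lt_of_le hs.2 with hst | hst
  · rw [hst, ht₀Z.2]
  by_contra hgs
  push_neg at hgs
  -- g 0 ≤ 0 < g s, so there's a zero in [0, s], contradicting minimality of t₀.
  have hcontS : ContinuousOn g (Set.Icc 0 s) :=
    hcont.mono (Set.Icc_subset_Ici_self)
  have : (0:ℝ) ∈ g '' Set.Icc 0 s :=
    intermediate_value_Icc hs.1 hcontS ⟨hg0, le_of_lt hgs⟩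
  obtain ⟨x, hx, hgx⟩ := this
  have hxZ : x ∈ Z := ⟨⟨hx.1, le_trans hx.2 (le_trans hs.2 ht₀Z.1.2)⟩, hgx⟩
  have : t₀ ≤ x := csInf_le hZbdd hxZ
  linarith [hx.2, hst]
end

section
/- Let P, Q ⊆ ℝⁿ be closed sets, let φ : [0, τ] → ℝⁿ be continuous with φ(0) ∉ P and φ(τ) ∈ P, and suppose that for every t ∈ [0, τ], if φ(s) ∉ P for all s ∈ [0, t], then φ(t) ∈ Q. Then there exists t ∈ [0, τ] with φ(t) ∈ P and φ(s) ∈ Q for all s ∈ [0, t]. -/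
/-- Topological refinement (COR, closed case): a continuous trajectory on `[0, τ]` that stays in
the closed set `Q` while it has not yet reached the closed set `P`, starts outside `P`, and
reaches `P` at time `τ`, actually reaches `P` without ever leaving `Q`. -/
theorem stmt17 {n : ℕ} (P Q : Set (EuclideanSpace ℝ (Fin n)))
    (hP : IsClosed P) (hQ : IsClosed Q) (τ : ℝ) (hτ : 0 ≤ τ)
    (φ : ℝ → EuclideanSpace ℝ (Fin n)) (hcont : ContinuousOn φ (Set.Icc 0 τ))
    (h0 : φ 0 ∉ P) (hτP : φ τ ∈ P)
    (hstay : ∀ t ∈ Set.Icc (0 : ℝ) τ, (∀ s ∈ Set.Icc (0 : ℝ) t, φ s ∉ P) → φ t ∈ Q) :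
    ∃ t ∈ Set.Icc (0 : ℝ) τ, φ t ∈ P ∧ ∀ s ∈ Set.Icc (0 : ℝ) t, φ s ∈ Q := by
  set S : Set ℝ := Set.Icc 0 τ ∩ φ ⁻¹' P with hS
  have hSc : IsClosed S := hcont.preimage_isClosed_of_isClosed isClosed_Icc hP
  have hne : S.Nonempty := ⟨τ, ⟨⟨hτ, le_refl τ⟩, hτP⟩⟩
  have hbdd : BddBelow S := ⟨0, fun x hx => hx.1.1⟩
  set t₀ := sInf S with ht₀
  have ht₀S : t₀ ∈ S := hSc.csInf_mem hne hbdd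
  have ht₀Icc : t₀ ∈ Set.Icc 0 τ := ht₀S.1
  have ht₀pos : 0 < t₀ := by
    rcases lt_or_eq_of_le ht₀Icc.1 with h | h
    · exact h
    · exact absurd (h ▸ ht₀S.2) h0
  refine ⟨t₀, ht₀Icc, ht₀S.2, ?_⟩
  -- first, Q on [0, t₀)
  have hQlt : ∀ s ∈ Set.Ico (0 : ℝ) t₀, φ s ∈ Q := by
    intro s hs
    refine hstay s ⟨hs.1, le_trans hs.2.le ht₀Icc.2⟩ ?_
    intro u hu hP'
    have : t₀ ≤ u := csInf_le hbdd ⟨⟨hu.1, le_trans hu.2 (le_trans hs.2.le ht₀Icc.2)⟩, hP'⟩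
    exact absurd (lt_of_le_of_lt hu.2 hs.2) (not_lt.mpr this)
  intro s hs
  rcases lt_or_eq_of_le hs.2 with h | h
  · exact hQlt s ⟨hs.1, h⟩
  · subst h
    have hsub : Set.Ico (0 : ℝ) t₀ ⊆ Set.Icc 0 τ := fun u hu =>
      ⟨hu.1, le_trans hu.2.le ht₀Icc.2⟩
    have hcw : ContinuousWithinAt φ (Set.Icc 0 τ) t₀ := hcont t₀ ht₀Icc
    have htends : Filter.Tendsto φ (nhdsWithin t₀ (Set.Ico 0 t₀)) (nhds (φ t₀)) :=
      hcw.mono hsub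
    have hnb : (nhdsWithin t₀ (Set.Ico 0 t₀)).NeBot :=
      mem_closure_iff_nhdsWithin_neBot.mp
        (by rw [closure_Ico ht₀pos.ne]; exact ⟨ht₀pos.le, le_rfl⟩)
    exact hQ.mem_of_tendsto htends (Filter.eventually_of_mem self_mem_nhdsWithin hQlt)
end

section
/- Let P, Q ⊆ ℝⁿ be open sets, let φ : [0, τ] → ℝⁿ be continuous with φ(0) ∉ P and φ(τ) ∈ P, and suppose that for every t ∈ [0, τ], if φ(s) ∉ P for all s ∈ [0, t], then φ(t) ∈ Q. Then there exists t ∈ [0, τ] with φ(t) ∈ P and φ(s) ∈ Q for all s ∈ [0, t]. -/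
/-- Topological refinement (COR, open case): a continuous trajectory on `[0, τ]` that stays in
the open set `Q` while it has not yet reached the open set `P`, starts outside `P`, and reaches
`P` at time `τ`, actually reaches `P` without ever leaving `Q`. -/
theorem stmt18 {n : ℕ} (P Q : Set (EuclideanSpace ℝ (Fin n)))
    (hP : IsOpen P) (hQ : IsOpen Q) (τ : ℝ) (hτ : 0 ≤ τ)
    (φ : ℝ → EuclideanSpace ℝ (Fin n)) (hcont : ContinuousOn φ (Set.Icc 0 τ))
    (h0 : φ 0 ∉ P) (hτP : φ τ ∈ P)
    (hstay : ∀ t ∈ Set.Icc (0 : ℝ) τ, (∀ s ∈ Set.Icc (0 : ℝ) t, φ s ∉ P) → φ t ∈ Q) :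
    ∃ t ∈ Set.Icc (0 : ℝ) τ, φ t ∈ P ∧ ∀ s ∈ Set.Icc (0 : ℝ) t, φ s ∈ Q := by
  set A : Set ℝ := {t | t ∈ Set.Icc (0:ℝ) τ ∧ ∀ s ∈ Set.Icc (0:ℝ) t, φ s ∉ P} with hAdef
  have h0A : (0:ℝ) ∈ A := by
    refine ⟨⟨le_refl 0, hτ⟩, fun s hs => ?_⟩
    have : s = 0 := le_antisymm hs.2 hs.1
    simpa [this] using h0
  have hbdd : BddAbove A := ⟨τ, fun t ht => ht.1.2⟩
  set T := sSup A with hT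
  have hTmem : T ∈ Set.Icc (0:ℝ) τ :=
    ⟨le_csSup hbdd h0A, csSup_le ⟨0, h0A⟩ (fun t ht => ht.1.2)⟩
  have hbefore : ∀ s, 0 ≤ s → s < T → φ s ∉ P := by
    intro s hs0 hslt
    obtain ⟨a, haA, hsa⟩ := exists_lt_of_lt_csSup ⟨0, h0A⟩ hslt
    exact haA.2 s ⟨hs0, hsa.le⟩
  have hTP : φ T ∉ P := by
    intro hTPmem
    have hT0 : 0 < T := by
      rcases lt_or_eq_of_le hTmem.1 with h | h
      · exact h
      · exact absurd (by rw [← h] at hTPmem; exact hTPmem) h0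
    have hc := (hcont T hTmem).preimage_mem_nhdsWithin (hP.mem_nhds hTPmem)
    rw [Metric.mem_nhdsWithin_iff] at hc
    obtain ⟨ε, hε, hball⟩ := hc
    set s := T - min ε T / 2 with hsdef
    have hmin : 0 < min ε T := lt_min hε hT0
    have hmT : min ε T ≤ T := min_le_right ε T
    have hmε : min ε T ≤ ε := min_le_left ε T
    have hs0 : 0 ≤ s := by rw [hsdef]; linarith
    have hsT : s < T := by rw [hsdef]; linarith
    have hsball : s ∈ Metric.ball T ε := by
      rw [Metric.mem_ball, Real.dist_eq, hsdef, abs_of_nonpos (by linarith)]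
      linarith
    have hsIcc : s ∈ Set.Icc (0:ℝ) τ := ⟨hs0, le_trans hsT.le hTmem.2⟩
    exact hbefore s hs0 hsT (hball ⟨hsball, hsIcc⟩)
  have hTA : T ∈ A := by
    refine ⟨hTmem, fun s hs => ?_⟩
    rcases lt_or_eq_of_le hs.2 with h | h
    · exact hbefore s hs.1 h
    · rw [h]; exact hTP
  have hTlt : T < τ := by
    rcases lt_or_eq_of_le hTmem.2 with h | h
    · exact h
    · exact absurd (by rw [← h] at hτP; exact hτP) hTP
  have hQon : ∀ s ∈ Set.Icc (0:ℝ) T, φ s ∈ Q := by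
    intro s hs
    exact hstay s ⟨hs.1, le_trans hs.2 hTmem.2⟩
      (fun u hu => hTA.2 u ⟨hu.1, le_trans hu.2 hs.2⟩)
  have hc := (hcont T hTmem).preimage_mem_nhdsWithin
    (hQ.mem_nhds (hQon T ⟨hTmem.1, le_refl T⟩))
  rw [Metric.mem_nhdsWithin_iff] at hc
  obtain ⟨ε, hε, hball⟩ := hc
  set t₀ := min (T + ε / 2) τ with ht₀def
  have hTt₀ : T < t₀ := lt_min (by linarith) hTlt
  have ht₀τ : t₀ ≤ τ := min_le_right _ _
  have ht₀A : t₀ ∉ A := fun h => absurd (le_csSup hbdd h) (not_le.mpr hTt₀)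
  have : ∃ s ∈ Set.Icc (0:ℝ) t₀, φ s ∈ P := by
    by_contra hcon
    push_neg at hcon
    exact ht₀A ⟨⟨le_trans hTmem.1 hTt₀.le, ht₀τ⟩, hcon⟩
  obtain ⟨s, hsIcc, hsP⟩ := this
  have hTs : T < s := by
    by_contra h
    push_neg at h
    exact hTA.2 s ⟨hsIcc.1, h⟩ hsP
  refine ⟨s, ⟨hsIcc.1, le_trans hsIcc.2 ht₀τ⟩, hsP, fun u hu => ?_⟩
  rcases le_or_gt u T with h | h
  · exact hQon u ⟨hu.1, h⟩
  · apply hball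
    refine ⟨?_, ⟨hu.1, le_trans hu.2 (le_trans hsIcc.2 ht₀τ)⟩⟩
    have hut₀ : u ≤ t₀ := le_trans hu.2 hsIcc.2
    have : u ≤ T + ε / 2 := le_trans hut₀ (min_le_left _ _)
    simp [Real.dist_eq, abs_lt]
    constructor <;> linarith
end
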